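/- Suppose G carries a family (Γ_r)_{r>0} of dilations: each Γ_r is a homeomorphic group automorphism of G, Γ_r ∘ Γ_s = Γ_{rs} for all r, s > 0, for each x ∈ G the map r ↦ Γ_r(x) is continuous with Γ_r(x) → e as r ↓ 0, and there exists Q ∈ ℕ such that μ(Γ_r(E)) = r^Q · μ(E) for every Borel set E ⊆ G and every r > 0. Let E ⊆ G be a Borel set with 0 < μ(E) < ∞ and let (r_k)_{k∈ℕ} be a sequence of positive reals with r_k → ∞. Then (Γ_{r_k}(E))_{k∈ℕ} is a Følner sequence in G. -/

import Mathlib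

open MeasureTheory Filter Topology
open scoped Pointwise ENNReal

/-- For a Borel set `E` with `0 < μ E < ∞`, the Følner defect function
`β_E(x) = μ(E \ Ex⁻¹) / μ(E)`. Here `Ex⁻¹ = {y | yx ∈ E} = (· * x) ⁻¹' E`. -/
noncomputable def folnerDefect {G : Type*} [Group G] [MeasurableSpace G]
    (μ : Measure G) (E : Set G) (x : G) : ℝ :=
  (μ (E \ (· * x) ⁻¹' E)).toReal / (μ E).toReal

/-- A sequence of Borel sets of finite positive measure is a Følner sequence if
`β_{E k} → 0` uniformly on every compact subset of `G`. -/
def IsFolnerSeq {G : Type*} [Group G] [TopologicalSpace G] [MeasurableSpace G]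
    (μ : Measure G) (E : ℕ → Set G) : Prop :=
  ∀ K : Set G, IsCompact K →
    TendstoUniformlyOn (fun k x => folnerDefect μ (E k) x) 0 atTop K

-- Lemma A
lemma tendsto_measure_diff_translate {G : Type*} [Group G] [TopologicalSpace G]
    [IsTopologicalGroup G] [T2Space G] [MeasurableSpace G] [BorelSpace G]
    (μ : Measure G) [μ.IsMulRightInvariant] [μ.Regular]
    (E : Set G) (hE : MeasurableSet E) (hEfin : μ E < ∞) :
    Tendsto (fun y => μ (E \ (· * y) ⁻¹' E)) (𝓝 1) (𝓝 0) := by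
  rw [ENNReal.tendsto_nhds_zero]
  intro ε hε
  set δ : ℝ≥0∞ := min (ε / 2) 1 with hδdef
  have hδ0 : δ ≠ 0 :=
    (lt_min (ENNReal.div_pos hε.ne' (by norm_num)) one_pos).ne' 
  have hδε : δ + δ ≤ ε := by
    calc δ + δ ≤ ε / 2 + ε / 2 := add_le_add (min_le_left _ _) (min_le_left _ _)
    _ = ε := ENNReal.add_halves ε
  obtain ⟨K, hKE, hKc, hK⟩ := hE.exists_isCompact_lt_add hEfin.ne hδ0
  obtain ⟨O, hEO, hOopen, hO⟩ := E.exists_isOpen_lt_add hEfin.ne hδ0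
  obtain ⟨V, hV, hKV⟩ := compact_open_separated_mul_right hKc hOopen (hKE.trans hEO)
  have hKfin : μ K ≠ ∞ := ((measure_mono hKE).trans_lt hEfin).ne
  have h1 : μ (E \ K) < δ :=
    measure_diff_lt_of_lt_add hKc.measurableSet.nullMeasurableSet hKE hKfin hK
  have h2 : μ (O \ E) < δ :=
    measure_diff_lt_of_lt_add hE.nullMeasurableSet hEO hEfin.ne hO
  filter_upwards [hV] with y hy
  have hsub : E \ (· * y) ⁻¹' E ⊆ (E \ K) ∪ (· * y) ⁻¹' (O \ E) := by
    intro z hz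
    by_cases hzK : z ∈ K
    · right
      refine ⟨hKV (Set.mul_mem_mul hzK hy), hz.2⟩
    · left; exact ⟨hz.1, hzK⟩
  calc μ (E \ (· * y) ⁻¹' E) ≤ μ ((E \ K) ∪ (· * y) ⁻¹' (O \ E)) := measure_mono hsub
    _ ≤ μ (E \ K) + μ ((· * y) ⁻¹' (O \ E)) := measure_union_le _ _
    _ = μ (E \ K) + μ (O \ E) := by rw [measure_preimage_mul_right]
    _ ≤ δ + δ := add_le_add h1.le h2.le
    _ ≤ ε := hδε

-- Lemma B
lemma eventually_dilation_mem {G : Type*} [Group G] [TopologicalSpace G]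
    [IsTopologicalGroup G] [LocallyCompactSpace G] [T2Space G]
    (Γ : ℝ → G ≃* G)
    (hΓcont : ∀ r : ℝ, 0 < r → Continuous (Γ r) ∧ Continuous (Γ r).symm)
    (hΓzero : ∀ x : G, Tendsto (fun r : ℝ => Γ r x) (nhdsWithin 0 (Set.Ioi 0)) (nhds 1))
    (K : Set G) (hK : IsCompact K) (U : Set G) (hU : U ∈ 𝓝 (1 : G)) :
    ∀ᶠ s in 𝓝[>] (0 : ℝ), ∀ x ∈ K, Γ s x ∈ U := by
  -- step 1: V₂*V₂ ⊆ U, V₁*V₁ ⊆ V₂, V₁ ⊆ V₂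
  obtain ⟨V₂, hV₂o, hV₂1, hV₂U⟩ := exists_open_nhds_one_mul_subset hU
  obtain ⟨V₁, hV₁o, hV₁1, hV₁V₂⟩ := exists_open_nhds_one_mul_subset (hV₂o.mem_nhds hV₂1)
  have hV₁sub : V₁ ⊆ V₂ := fun z hz => hV₁V₂ (by simpa using Set.mul_mem_mul hz hV₁1)
  -- step 2: closed nbhd C ⊆ V₁ ∩ V₁⁻¹
  have hVinter : V₁ ∩ V₁⁻¹ ∈ 𝓝 (1 : G) := by
    refine Filter.inter_mem (hV₁o.mem_nhds hV₁1) ?_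
    simpa using (hV₁o.preimage continuous_inv).mem_nhds (by simpa using hV₁1)
  obtain ⟨C, hCnhds, hCclosed, hCsub⟩ := exists_mem_nhds_isClosed_subset hVinter
  -- step 3: Baire sets
  set A : ℕ → Set G := fun n => {x | ∀ s ∈ Set.Ioc (0:ℝ) (1 / (n + 1)), Γ s x ∈ C} with hA
  have hAclosed : ∀ n, IsClosed (A n) := by
    intro n
    have : A n = ⋂ s ∈ Set.Ioc (0:ℝ) (1 / (n + 1)), (Γ s) ⁻¹' C := by
      ext x; simp [hA]
    rw [this]
    exact isClosed_biInter fun s hs => hCclosed.preimage (hΓcont s hs.1).1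
  have hAcover : ⋃ n, A n = Set.univ := by
    refine Set.eq_univ_of_forall fun x => Set.mem_iUnion.2 ?_
    have : (fun s : ℝ => Γ s x) ⁻¹' C ∈ 𝓝[>] (0:ℝ) := hΓzero x hCnhds
    rw [mem_nhdsWithin] at this
    obtain ⟨t, hto, ht0, hts⟩ := this
    obtain ⟨δ, hδ0, hδt⟩ := Metric.isOpen_iff.1 hto 0 ht0
    obtain ⟨n, hn⟩ := exists_nat_one_div_lt hδ0
    refine ⟨n, fun s hs => hts ⟨hδt ?_, hs.1⟩⟩
    rw [Metric.mem_ball, Real.dist_eq, sub_zero, abs_of_pos hs.1]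
    exact hs.2.trans_lt hn
  obtain ⟨N, x₀, hx₀⟩ : ∃ N, (interior (A N)).Nonempty :=
    nonempty_interior_of_iUnion_of_closed hAclosed hAcover
  -- step 5: W
  set W : Set G := (fun w => x₀ * w) ⁻¹' interior (A N) with hW
  have hWopen : IsOpen W := (isOpen_interior).preimage (continuous_mul_left x₀)
  have hW1 : (1 : G) ∈ W := by simpa [hW] using hx₀
  -- step 6: key
  have hkey : ∀ w ∈ W, ∀ s ∈ Set.Ioc (0:ℝ) (1 / (N + 1)), Γ s w ∈ V₂ := by
    intro w hw s hs
    have h1 : Γ s (x₀ * w) ∈ C := interior_subset hw s hs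
    have h2 : Γ s x₀ ∈ C := interior_subset hx₀ s hs
    have heq : Γ s w = (Γ s x₀)⁻¹ * Γ s (x₀ * w) := by
      rw [map_mul]; group
    rw [heq]
    have hl : (Γ s x₀)⁻¹ ∈ V₁ := by
      have := (hCsub h2).2
      simpa using this
    exact hV₁V₂ (Set.mul_mem_mul hl (hCsub h1).1)
  -- step 7: finite subcover
  have hcov : K ⊆ ⋃ x ∈ K, x • W := fun x hx =>
    Set.mem_biUnion hx ⟨1, hW1, mul_one x⟩
  obtain ⟨t, htK, htfin, htcov⟩ :=
    hK.elim_finite_subcover_image (fun x _ => hWopen.smul x) hcov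
  -- step 8: eventually
  have hIoc : Set.Ioc (0:ℝ) (1 / (N + 1)) ∈ 𝓝[>] (0:ℝ) :=
    Ioc_mem_nhdsGT (by positivity)
  have hpt : ∀ᶠ s in 𝓝[>] (0:ℝ), ∀ i ∈ t, Γ s i ∈ V₁ :=
    (Filter.eventually_all_finite htfin).2 fun i _ => (hΓzero i) (hV₁o.mem_nhds hV₁1)
  filter_upwards [hIoc, hpt] with s hs hpt' x hx
  obtain ⟨i, hit, hxi⟩ := Set.mem_iUnion₂.1 (htcov hx)
  obtain ⟨w, hwW, hiw⟩ := hxi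
  have hxeq : x = i * w := by rw [← hiw]; rfl
  rw [hxeq, map_mul]
  exact hV₂U (Set.mul_mem_mul (hV₁sub (hpt' i hit)) (hkey w hwW s hs))

/-- If `G` carries a family of dilations `(Γ_r)_{r>0}` scaling the Haar
measure by `r^Q`, `E` is a Borel set of finite positive measure, and `r_k → ∞`, then
`(Γ_{r_k}(E))` is a Følner sequence. -/
theorem isFolnerSeq_dilations {G : Type*} [Group G] [TopologicalSpace G]
    [IsTopologicalGroup G] [LocallyCompactSpace G] [SigmaCompactSpace G] [T2Space G]
    [MeasurableSpace G] [BorelSpace G]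
    (μ : Measure G) [μ.IsMulRightInvariant] [IsFiniteMeasureOnCompacts μ]
    [μ.IsOpenPosMeasure] [μ.Regular] (hμ : μ ≠ 0)
    -- the family of dilations: each `Γ r`, `r > 0`, is a group automorphism of `G`,
    (Γ : ℝ → G ≃* G)
    -- which is a homeomorphism,
    (hΓcont : ∀ r : ℝ, 0 < r → Continuous (Γ r) ∧ Continuous (Γ r).symm)
    -- satisfying `Γ r ∘ Γ s = Γ (r * s)`,
    (hΓmul : ∀ r s : ℝ, 0 < r → 0 < s → ∀ x : G, Γ r (Γ s x) = Γ (r * s) x)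
    -- continuity in the parameter `r` on `(0, ∞)`,
    (hΓparam : ∀ x : G, ContinuousOn (fun r : ℝ => Γ r x) (Set.Ioi 0))
    -- with `Γ r x → e` as `r ↓ 0`,
    (hΓzero : ∀ x : G, Tendsto (fun r : ℝ => Γ r x) (nhdsWithin 0 (Set.Ioi 0)) (nhds 1))
    -- and scaling the Haar measure by `r^Q`:
    (Q : ℕ)
    (hΓmeas : ∀ (E : Set G), MeasurableSet E → ∀ r : ℝ, 0 < r →
      μ (Γ r '' E) = ENNReal.ofReal (r ^ Q) * μ E)
    (E : Set G) (hE : MeasurableSet E) (hE0 : 0 < μ E) (hEfin : μ E < ∞)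
    (r : ℕ → ℝ) (hr : ∀ k, 0 < r k) (hrtop : Tendsto r atTop atTop) :
    IsFolnerSeq μ (fun k => Γ (r k) '' E) := by
  classical
  -- Γ 1 = id
  have hΓ1 : ∀ x : G, Γ 1 x = x := by
    intro x
    have h := hΓmul 1 1 one_pos one_pos x
    rw [mul_one] at h
    exact (Γ 1).injective h
  -- the β-identity
  have hC : ∀ ρ : ℝ, 0 < ρ → ∀ x : G,
      folnerDefect μ (Γ ρ '' E) x = folnerDefect μ E (Γ ρ⁻¹ x) := by
    intro ρ hρ x
    have hρ' : (0:ℝ) < ρ⁻¹ := inv_pos.2 hρ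
    set y : G := Γ ρ⁻¹ x with hy
    have hΓρy : Γ ρ y = x := by
      rw [hy, hΓmul ρ ρ⁻¹ hρ hρ', mul_inv_cancel₀ hρ.ne', hΓ1]
    have himg : (· * x) ⁻¹' (Γ ρ '' E) = Γ ρ '' ((· * y) ⁻¹' E) := by
      ext z
      simp only [Set.mem_preimage, Set.mem_image]
      constructor
      · rintro ⟨u, hu, huz⟩
        refine ⟨u * y⁻¹, ?_, ?_⟩
        · simpa using hu
        · rw [map_mul, map_inv, hΓρy, huz, mul_inv_cancel_right]
      · rintro ⟨w, hw, rfl⟩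
        exact ⟨w * y, hw, by rw [map_mul, hΓρy]⟩
    have hdiff : Γ ρ '' E \ (· * x) ⁻¹' (Γ ρ '' E) = Γ ρ '' (E \ (· * y) ⁻¹' E) := by
      rw [himg, ← Set.image_diff (Γ ρ).injective]
    have hmeasD : MeasurableSet (E \ (· * y) ⁻¹' E) :=
      hE.diff (hE.preimage (measurable_mul_const y))
    have h1 : μ (Γ ρ '' E \ (· * x) ⁻¹' (Γ ρ '' E))
        = ENNReal.ofReal (ρ ^ Q) * μ (E \ (· * y) ⁻¹' E) := by
      rw [hdiff, hΓmeas _ hmeasD ρ hρ]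
    have h2 : μ (Γ ρ '' E) = ENNReal.ofReal (ρ ^ Q) * μ E := hΓmeas E hE ρ hρ
    have hc : (ENNReal.ofReal (ρ ^ Q)).toReal = ρ ^ Q :=
      ENNReal.toReal_ofReal (by positivity)
    rw [folnerDefect, folnerDefect, h1, h2, ENNReal.toReal_mul, ENNReal.toReal_mul, hc,
      mul_div_mul_left _ _ (by positivity : (ρ:ℝ) ^ Q ≠ 0)]
  -- the defect of E tends to 0 at 1
  have hgE : Tendsto (fun z : G => folnerDefect μ E z) (𝓝 1) (𝓝 0) := by
    have h0 := tendsto_measure_diff_translate μ E hE hEfin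
    have h1 : Tendsto (fun z : G => (μ (E \ (· * z) ⁻¹' E)).toReal) (𝓝 1) (𝓝 0) := by
      simpa [Function.comp_def] using (ENNReal.tendsto_toReal (by simp)).comp h0
    simpa [folnerDefect] using h1.div_const (μ E).toReal
  intro K hK
  rw [Metric.tendstoUniformlyOn_iff]
  intro ε hε
  have hU : {z : G | folnerDefect μ E z < ε} ∈ 𝓝 (1 : G) :=
    hgE.eventually (gt_mem_nhds hε)
  have hBB := eventually_dilation_mem Γ hΓcont hΓzero K hK _ hU
  -- (r k)⁻¹ → 0 within Ioi 0
  have hinv : Tendsto (fun k => (r k)⁻¹) atTop (𝓝[>] (0:ℝ)) := by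
    refine tendsto_nhdsWithin_iff.2 ⟨?_, Eventually.of_forall fun k => inv_pos.2 (hr k)⟩
    exact tendsto_inv_atTop_zero.comp hrtop
  filter_upwards [hinv.eventually hBB] with k hk x hxK
  have hd := hC (r k) (hr k) x
  have hlt : folnerDefect μ (Γ (r k) '' E) x < ε := by
    rw [hd]; exact hk x hxK
  have hnn : 0 ≤ folnerDefect μ (Γ (r k) '' E) x := by
    unfold folnerDefect; positivity
  simp only [Pi.zero_apply]
  rw [Real.dist_eq, abs_sub_comm, sub_zero, abs_of_nonneg hnn]
  exact hlt
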